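/- For every real k with 0 ≤ k < 1, the descending Landen identity K(2√k/(1+k)) = (1+k) K(k) holds, where K(k) = ∫₀^{π/2} dθ / sqrt(1 - k² sin²θ) is the complete elliptic integral of the first kind (note that 0 ≤ 2√k/(1+k) < 1). -/

import Mathlib

/-- The complete elliptic integral of the first kind,
`K(k) = ∫₀^{π/2} dθ / sqrt(1 - k² sin²θ)`. -/
noncomputable def ellipticK (k : ℝ) : ℝ :=
  ∫ θ in (0:ℝ)..(Real.pi / 2), 1 / Real.sqrt (1 - k ^ 2 * Real.sin θ ^ 2)

open Real Set intervalIntegral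

lemma landen_aux_pos {k : ℝ} (h0 : 0 ≤ k) (h1 : k < 1) (θ : ℝ) :
    0 < 1 - k ^ 2 * Real.sin θ ^ 2 := by
  nlinarith [Real.sin_sq_le_one θ, sq_nonneg (Real.sin θ), sq_nonneg k]

lemma landen_aux_pos' {k : ℝ} (h0 : 0 ≤ k) (h1 : k < 1) (θ : ℝ) :
    0 < 1 - k * Real.sin θ ^ 2 := by
  nlinarith [Real.sin_sq_le_one θ, sq_nonneg (Real.sin θ)]

set_option maxHeartbeats 1000000 in
/-- The descending Landen identity `K(2√k/(1+k)) = (1+k) K(k)` for `0 ≤ k < 1`. -/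
theorem ellipticK_landen (k : ℝ) (h0 : 0 ≤ k) (h1 : k < 1) :
    ellipticK (2 * Real.sqrt k / (1 + k)) = (1 + k) * ellipticK k := by
  have hk1 : (0:ℝ) < 1 + k := by linarith
  set k₁ : ℝ := 2 * Real.sqrt k / (1 + k) with hk₁def
  have hsq : Real.sqrt k ^ 2 = k := Real.sq_sqrt h0
  have hs1 : Real.sqrt k < 1 := by
    nlinarith [Real.sqrt_nonneg k]
  have hk₁0 : 0 ≤ k₁ := by positivity
  have hk₁1 : k₁ < 1 := by
    rw [hk₁def, div_lt_one hk1]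
    nlinarith [Real.sqrt_nonneg k]
  have hk₁sq : k₁ ^ 2 = 4 * k / (1 + k) ^ 2 := by
    rw [hk₁def, div_pow]
    congr 1
    nlinarith
  -- the substitution function
  set g : ℝ → ℝ := fun θ => (1 + k) * Real.sin θ / (1 + k * Real.sin θ ^ 2) with hgdef
  set h : ℝ → ℝ := fun θ => Real.arcsin (g θ) with hhdef
  have hden : ∀ θ : ℝ, 0 < 1 + k * Real.sin θ ^ 2 := fun θ => by positivity
  -- continuity facts
  have hgcont : Continuous g := by
    apply Continuous.div
    · exact continuous_const.mul Real.continuous_sin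
    · exact continuous_const.add (continuous_const.mul (Real.continuous_sin.pow 2))
    · exact fun θ => (hden θ).ne'
  have hhcont : Continuous h := Real.continuous_arcsin.comp hgcont
  -- values of g on [0, π/2]
  have hg_mem : ∀ θ ∈ Icc (0:ℝ) (Real.pi / 2), g θ ∈ Icc (0:ℝ) 1 := by
    intro θ hθ
    have hs0 : 0 ≤ Real.sin θ := Real.sin_nonneg_of_nonneg_of_le_pi hθ.1
      (hθ.2.trans (by linarith [Real.pi_pos]))
    have hs1' : Real.sin θ ≤ 1 := Real.sin_le_one θ
    constructor
    · exact div_nonneg (by positivity) (hden θ).le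
    · rw [div_le_one (hden θ)]
      nlinarith [mul_nonneg (by linarith : (0:ℝ) ≤ 1 - Real.sin θ)
        (by nlinarith : (0:ℝ) ≤ 1 - k * Real.sin θ)]
  -- derivative of h on the interior
  have hderiv : ∀ θ ∈ Ioo (0:ℝ) (Real.pi / 2),
      HasDerivAt h ((1 + k) * (1 - k * Real.sin θ ^ 2) /
        ((1 + k * Real.sin θ ^ 2) * Real.sqrt (1 - k ^ 2 * Real.sin θ ^ 2))) θ := by
    intro θ hθ
    have hs0 : 0 < Real.sin θ := Real.sin_pos_of_pos_of_lt_pi hθ.1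
      (hθ.2.trans_le (by linarith [Real.pi_pos]))
    have hc0 : 0 < Real.cos θ := Real.cos_pos_of_mem_Ioo
      ⟨by linarith [Real.pi_pos, hθ.1], hθ.2⟩
    have hslt : Real.sin θ < 1 := by
      have := Real.sin_lt_sin_of_lt_of_le_pi_div_two (x := θ) (y := Real.pi / 2)
        (by linarith [Real.pi_pos, hθ.1]) le_rfl hθ.2
      simpa using this
    set s := Real.sin θ
    set c := Real.cos θ
    have hD : 0 < 1 + k * s ^ 2 := hden θ
    have hks : k * s ^ 2 < 1 := by nlinarith
    have hg0 : 0 < g θ := by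
      simp only [hgdef]
      positivity
    have hg1 : g θ < 1 := by
      rw [hgdef]
      simp only
      rw [div_lt_one hD]
      nlinarith [mul_pos (by linarith : (0:ℝ) < 1 - Real.sin θ)
        (by nlinarith : (0:ℝ) < 1 - k * Real.sin θ)]
    -- derivative of g
    have hgd : HasDerivAt g
        ((1 + k) * c * (1 - k * s ^ 2) / (1 + k * s ^ 2) ^ 2) θ := by
      have hnum : HasDerivAt (fun θ => (1 + k) * Real.sin θ) ((1 + k) * c) θ :=
        (Real.hasDerivAt_sin θ).const_mul (1 + k)
      have hden' : HasDerivAt (fun θ => 1 + k * Real.sin θ ^ 2)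
          (k * (2 * s * c)) θ := by
        have : HasDerivAt (fun θ => Real.sin θ ^ 2) (2 * s * c) θ := by
          have := (Real.hasDerivAt_sin θ).fun_pow 2
          simpa [mul_comm, mul_assoc, mul_left_comm] using this
        simpa using (this.const_mul k).const_add 1
      have := hnum.div hden' hD.ne'
      refine this.congr_deriv ?_
      field_simp
      ring
    -- derivative of arcsin at g θ
    have harc : HasDerivAt Real.arcsin (1 / Real.sqrt (1 - g θ ^ 2)) (g θ) :=
      Real.hasDerivAt_arcsin (by linarith) (by linarith)
    have hcomp := harc.comp θ hgd
    -- simplify the value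
    have hsqrt : Real.sqrt (1 - g θ ^ 2)
        = c * Real.sqrt (1 - k ^ 2 * s ^ 2) / (1 + k * s ^ 2) := by
      have h2 : 1 - g θ ^ 2
          = (c * Real.sqrt (1 - k ^ 2 * s ^ 2) / (1 + k * s ^ 2)) ^ 2 := by
        have hc2 : c ^ 2 = 1 - s ^ 2 := Real.cos_sq' θ
        have expand : (c * Real.sqrt (1 - k ^ 2 * s ^ 2) / (1 + k * s ^ 2)) ^ 2
            = (1 - s ^ 2) * (1 - k ^ 2 * s ^ 2) / (1 + k * s ^ 2) ^ 2 := by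
          rw [div_pow, mul_pow, Real.sq_sqrt (landen_aux_pos h0 h1 θ).le, hc2]
        rw [expand, hgdef]
        simp only
        field_simp
        ring
      rw [h2, Real.sqrt_sq (by positivity)]
    rw [hhdef]
    refine hcomp.congr_deriv ?_
    rw [hsqrt]
    have hR : 0 < Real.sqrt (1 - k ^ 2 * s ^ 2) :=
      Real.sqrt_pos.mpr (landen_aux_pos h0 h1 θ)
    field_simp
  -- the integrand after substitution
  have key : ∀ θ ∈ Icc (0:ℝ) (Real.pi / 2),
      ((1 + k) * (1 - k * Real.sin θ ^ 2) /
        ((1 + k * Real.sin θ ^ 2) * Real.sqrt (1 - k ^ 2 * Real.sin θ ^ 2)))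
        * (1 / Real.sqrt (1 - k₁ ^ 2 * Real.sin (h θ) ^ 2))
      = (1 + k) * (1 / Real.sqrt (1 - k ^ 2 * Real.sin θ ^ 2)) := by
    intro θ hθ
    obtain ⟨hg0, hg1'⟩ := hg_mem θ hθ
    have hsin : Real.sin (h θ) = g θ := Real.sin_arcsin (by linarith) hg1'
    set s := Real.sin θ
    have hD : 0 < 1 + k * s ^ 2 := hden θ
    have hks : 0 < 1 - k * s ^ 2 := landen_aux_pos' h0 h1 θ
    have hRpos : 0 < Real.sqrt (1 - k ^ 2 * s ^ 2) :=
      Real.sqrt_pos.mpr (landen_aux_pos h0 h1 θ)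
    have h2 : 1 - k₁ ^ 2 * Real.sin (h θ) ^ 2
        = ((1 - k * s ^ 2) / (1 + k * s ^ 2)) ^ 2 := by
      rw [hsin, hk₁sq, hgdef]
      simp only
      field_simp
      ring
    rw [h2, Real.sqrt_sq (by positivity)]
    field_simp
  -- endpoints
  have hh0 : h 0 = 0 := by simp [hhdef, hgdef]
  have hhpi : h (Real.pi / 2) = Real.pi / 2 := by
    simp only [hhdef, hgdef, Real.sin_pi_div_two]
    rw [show (1 + k) * 1 / (1 + k * 1 ^ 2) = 1 by field_simp]
    exact Real.arcsin_one
  -- the substitution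
  have hpi2 : (0:ℝ) ≤ Real.pi / 2 := by linarith [Real.pi_pos]
  have huIcc : uIcc (0:ℝ) (Real.pi / 2) = Icc 0 (Real.pi / 2) := uIcc_of_le hpi2
  have hmm : min (0:ℝ) (Real.pi / 2) = 0 ∧ max (0:ℝ) (Real.pi / 2) = Real.pi / 2 :=
    ⟨min_eq_left hpi2, max_eq_right hpi2⟩
  have hf'cont : Continuous (fun θ => (1 + k) * (1 - k * Real.sin θ ^ 2) /
      ((1 + k * Real.sin θ ^ 2) * Real.sqrt (1 - k ^ 2 * Real.sin θ ^ 2))) := by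
    apply Continuous.div
    · exact continuous_const.mul
        (continuous_const.sub (continuous_const.mul (Real.continuous_sin.pow 2)))
    · exact (continuous_const.add (continuous_const.mul (Real.continuous_sin.pow 2))).mul
        (continuous_const.sub (continuous_const.mul (Real.continuous_sin.pow 2))).sqrt
    · intro θ
      have := Real.sqrt_pos.mpr (landen_aux_pos h0 h1 θ)
      positivity
  have hGcont : Continuous (fun φ => 1 / Real.sqrt (1 - k₁ ^ 2 * Real.sin φ ^ 2)) := by
    apply Continuous.div
    · exact continuous_const
    · exact (continuous_const.sub (continuous_const.mul (Real.continuous_sin.pow 2))).sqrt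
    · intro φ
      exact (Real.sqrt_pos.mpr (landen_aux_pos hk₁0 hk₁1 φ)).ne'
  have hsub := intervalIntegral.integral_comp_smul_deriv''
    (a := (0:ℝ)) (b := Real.pi / 2)
    (f := h)
    (f' := fun θ => (1 + k) * (1 - k * Real.sin θ ^ 2) /
      ((1 + k * Real.sin θ ^ 2) * Real.sqrt (1 - k ^ 2 * Real.sin θ ^ 2)))
    (g := fun φ => 1 / Real.sqrt (1 - k₁ ^ 2 * Real.sin φ ^ 2))
    (hhcont.continuousOn)
    (by
      rw [hmm.1, hmm.2]
      intro x hx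
      exact (hderiv x hx).hasDerivWithinAt)
    (hf'cont.continuousOn)
    (hGcont.continuousOn)
  rw [hh0, hhpi] at hsub
  calc ellipticK k₁ = ∫ φ in (0:ℝ)..(Real.pi / 2),
        1 / Real.sqrt (1 - k₁ ^ 2 * Real.sin φ ^ 2) := rfl
    _ = ∫ θ in (0:ℝ)..(Real.pi / 2),
        ((1 + k) * (1 - k * Real.sin θ ^ 2) /
          ((1 + k * Real.sin θ ^ 2) * Real.sqrt (1 - k ^ 2 * Real.sin θ ^ 2)))
          • ((fun φ => 1 / Real.sqrt (1 - k₁ ^ 2 * Real.sin φ ^ 2)) ∘ h) θ := hsub.symm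
    _ = ∫ θ in (0:ℝ)..(Real.pi / 2),
        (1 + k) * (1 / Real.sqrt (1 - k ^ 2 * Real.sin θ ^ 2)) := by
      apply intervalIntegral.integral_congr
      intro θ hθ
      rw [huIcc] at hθ
      simpa [smul_eq_mul, Function.comp] using key θ hθ
    _ = (1 + k) * ellipticK k := by
      rw [ellipticK, intervalIntegral.integral_const_mul]
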